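/- Let i ∈ ℕ, n ∈ ℕ, and let Q ⊂ Q₁ be two cubes in ℝⁿ. Then for every polynomial p of degree strictly less than i (in n variables), sup_{x ∈ Q₁} |p(x)| ≤ C (|Q₁|/|Q|)^{i/n} (|Q|^{-1} ∫_Q |p|²)^{1/2}, where C depends only on i and n. -/

import Mathlib

open MeasureTheory

/-- An axis-parallel cube in `ℝⁿ` with lower corner `c` and side length `L`. -/
def cube (n : ℕ) (c : Fin n → ℝ) (L : ℝ) : Set (Fin n → ℝ) :=
  Set.univ.pi fun d => Set.Icc (c d) (c d + L)

namespace Stmt4Aux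

open MvPolynomial

lemma cube_measurable {n : ℕ} (c : Fin n → ℝ) (L : ℝ) : MeasurableSet (cube n c L) :=
  MeasurableSet.univ_pi fun _ => measurableSet_Icc

lemma cube_compact {n : ℕ} (c : Fin n → ℝ) (L : ℝ) : IsCompact (cube n c L) :=
  isCompact_univ_pi fun _ => isCompact_Icc

noncomputable def expF {n i : ℕ} (m : Fin n → Fin i) : Fin n →₀ ℕ :=
  Finsupp.equivFunOnFinite.symm fun d => (m d : ℕ)

@[simp] lemma expF_apply {n i : ℕ} (m : Fin n → Fin i) (d : Fin n) : expF m d = m d := rfl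

lemma expF_injective {n i : ℕ} : Function.Injective (expF (n := n) (i := i)) := by
  intro m m' h
  funext d
  have := DFunLike.congr_fun h d
  simpa [expF, Fin.val_injective.eq_iff] using Fin.val_injective this

noncomputable def fA {n i : ℕ} (a : (Fin n → Fin i) → ℝ) (x : Fin n → ℝ) : ℝ :=
  ∑ m, a m * ∏ d, x d ^ (m d : ℕ)

lemma fA_cont {n i : ℕ} (a : (Fin n → Fin i) → ℝ) : Continuous (fA a) :=
  continuous_finset_sum _ fun m _ =>
    continuous_const.mul (continuous_finset_prod _ fun d _ => (continuous_apply d).pow _)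

theorem mv_eq_zero : ∀ {n : ℕ} (S : Fin n → Set ℝ), (∀ d, (S d).Infinite) →
    ∀ (p : MvPolynomial (Fin n) ℝ),
    (∀ x : Fin n → ℝ, (∀ d, x d ∈ S d) → eval x p = 0) → p = 0 := by
  intro n
  induction n with
  | zero =>
    intro S hS p h
    apply (MvPolynomial.isEmptyRingEquiv ℝ (Fin 0)).injective
    rw [map_zero]
    convert h finZeroElim (fun d => d.elim0)
    exact DFunLike.congr_fun (MvPolynomial.ringHom_ext (f := (isEmptyRingEquiv ℝ (Fin 0)).toRingHom)
      (g := eval finZeroElim) (fun r => by simp; exact coeff_zero_C r) (fun i => i.elim0)) p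
  | succ n ih =>
    intro S hS p h
    apply (finSuccEquiv ℝ n).injective
    rw [map_zero]
    refine Polynomial.ext fun k => ?_
    rw [Polynomial.coeff_zero]
    refine ih (fun d => S d.succ) (fun d => hS d.succ) _ (fun s hs => ?_)
    have hg : Polynomial.map (eval s) (finSuccEquiv ℝ n p) = 0 := by
      apply Polynomial.eq_zero_of_infinite_isRoot
      apply (hS 0).mono
      intro y hy
      have : eval (Fin.cons y s : Fin (n+1) → ℝ) p = 0 := by
        apply h
        intro d
        refine Fin.cases ?_ ?_ d
        · simpa using hy
        · intro d'; simpa using hs d'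
      simpa [Polynomial.IsRoot, ← eval_eq_eval_mv_eval'] using this
    have := coeff_eval_eq_eval_coeff (s' := s) (f := finSuccEquiv ℝ n p) (i := k)
    rw [hg] at this
    simpa using this.symm

theorem key (n i : ℕ) (hi : 0 < i) :
    ∃ ε : ℝ, 0 < ε ∧ ∀ a : (Fin n → Fin i) → ℝ,
      ε * (∑ m, |a m|) ^ 2 ≤ ∫ x in cube n 0 1, (fA a x) ^ 2 := by
  classical
  set K := cube n (0 : Fin n → ℝ) 1 with hKdef
  have hK1 : K = Set.univ.pi fun _ : Fin n => Set.Icc (0:ℝ) 1 := by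
    simp [hKdef, cube]
  have monCont : ∀ m : Fin n → Fin i, Continuous fun x : Fin n → ℝ => ∏ d, x d ^ (m d : ℕ) :=
    fun m => continuous_finset_prod _ fun d _ => (continuous_apply d).pow _
  have monInt : ∀ m m' : Fin n → Fin i,
      IntegrableOn (fun x => (∏ d, x d ^ (m d : ℕ)) * ∏ d, x d ^ (m' d : ℕ)) K :=
    fun m m' => (((monCont m).mul (monCont m')).continuousOn).integrableOn_compact (cube_compact _ _)
  set N : ((Fin n → Fin i) → ℝ) → ℝ := fun a => ∫ x in K, (fA a x) ^ 2 with hNdef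
  have hexp : ∀ a, N a = ∑ m, ∑ m', (a m * a m') *
      ∫ x in K, (∏ d, x d ^ (m d : ℕ)) * ∏ d, x d ^ (m' d : ℕ) := by
    intro a
    have hpt : ∀ x, (fA a x) ^ 2 = ∑ m, ∑ m', (a m * a m') *
        ((∏ d, x d ^ (m d : ℕ)) * ∏ d, x d ^ (m' d : ℕ)) := by
      intro x
      rw [sq, fA, Finset.sum_mul_sum]
      exact Finset.sum_congr rfl fun m _ => Finset.sum_congr rfl fun m' _ => by ring
    rw [hNdef]
    simp only [hpt]
    rw [integral_finset_sum]
    · refine Finset.sum_congr rfl fun m _ => ?_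
      rw [integral_finset_sum]
      · exact Finset.sum_congr rfl fun m' _ => integral_const_mul _ _
      · exact fun m' _ => (monInt m m').const_mul _
    · exact fun m _ => integrable_finset_sum _ fun m' _ => (monInt m m').const_mul _
  have Ncont : Continuous N := by
    have : N = fun a => ∑ m, ∑ m', (a m * a m') *
        ∫ x in K, (∏ d, x d ^ (m d : ℕ)) * ∏ d, x d ^ (m' d : ℕ) := funext hexp
    rw [this]
    exact continuous_finset_sum _ fun m _ => continuous_finset_sum _ fun m' _ =>
      ((continuous_apply m).mul (continuous_apply m')).mul continuous_const
  have Nnonneg : ∀ a, 0 ≤ N a := fun a => integral_nonneg fun x => sq_nonneg _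
  have Nsmul : ∀ (r : ℝ) (a), N (r • a) = r ^ 2 * N a := by
    intro r a
    have hpt : ∀ x, (fA (r • a) x) ^ 2 = r ^ 2 * (fA a x) ^ 2 := by
      intro x
      have : fA (r • a) x = r * fA a x := by
        rw [fA, fA, Finset.mul_sum]
        exact Finset.sum_congr rfl fun m _ => by simp [mul_assoc]
      rw [this]; ring
    rw [hNdef]
    simp only [hpt]
    exact integral_const_mul _ _
  have Npos : ∀ a : (Fin n → Fin i) → ℝ, (∑ m, |a m|) = 1 → 0 < N a := by
    intro a ha
    rcases (Nnonneg a).lt_or_eq with h | h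
    · exact h
    exfalso
    have hint : IntegrableOn (fun x => (fA a x) ^ 2) K :=
      (((fA_cont a).pow 2).continuousOn).integrableOn_compact (cube_compact _ _)
    have hae : (fun x => (fA a x) ^ 2) =ᵐ[volume.restrict K] 0 :=
      (integral_eq_zero_iff_of_nonneg (fun x => sq_nonneg _) hint).mp h.symm
    have hU : IsOpen {x : Fin n → ℝ | fA a x ≠ 0} :=
      isOpen_compl_singleton.preimage (fA_cont a)
    have hzero : ∀ z ∈ K, fA a z = 0 := by
      intro z hzK
      by_contra hne
      have hintK : interior K = Set.univ.pi fun _ : Fin n => Set.Ioo (0:ℝ) 1 := by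
        rw [hK1, interior_pi_set Set.finite_univ]
        simp [interior_Icc]
      have hcl : z ∈ closure (interior K) := by
        rw [hintK, closure_pi_set]
        have : ∀ d : Fin n, closure (Set.Ioo (0:ℝ) 1) = Set.Icc (0:ℝ) 1 :=
          fun _ => closure_Ioo one_ne_zero.symm
        rw [hK1] at hzK
        refine Set.mem_pi.mpr fun d _ => ?_
        rw [this d]
        exact hzK d (Set.mem_univ d)
      obtain ⟨w, hw1, hw2⟩ := mem_closure_iff.mp hcl _ hU hne
      have hVpos : 0 < volume ({x : Fin n → ℝ | fA a x ≠ 0} ∩ interior K) :=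
        (hU.inter isOpen_interior).measure_pos volume ⟨w, hw1, hw2⟩
      have hae' : ∀ᵐ x ∂(volume.restrict K), fA a x = 0 := by
        filter_upwards [hae] with x hx
        exact pow_eq_zero_iff two_ne_zero |>.mp hx
      have hnull : volume ({x : Fin n → ℝ | fA a x ≠ 0} ∩ K) = 0 := by
        have := ae_iff.mp hae'
        rwa [Measure.restrict_apply hU.measurableSet] at this
      have : volume ({x : Fin n → ℝ | fA a x ≠ 0} ∩ interior K) = 0 :=
        measure_mono_null (Set.inter_subset_inter_right _ interior_subset) hnull
      exact hVpos.ne' this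
    set P : MvPolynomial (Fin n) ℝ := ∑ m : Fin n → Fin i, monomial (expF m) (a m) with hPdef
    have hPeval : ∀ x, eval x P = fA a x := by
      intro x
      rw [hPdef, map_sum]
      refine Finset.sum_congr rfl fun m _ => ?_
      rw [eval_monomial]
      congr 1
      rw [Finsupp.prod_fintype]
      · simp
      · intro d; exact pow_zero _
    have hP0 : P = 0 := by
      refine mv_eq_zero (fun _ => Set.Icc 0 1) (fun _ => Set.Icc_infinite one_pos) P
        (fun x hx => ?_)
      rw [hPeval]
      exact hzero x (by rw [hK1]; exact Set.mem_pi.mpr fun d _ => hx d)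
    have ha0 : ∀ m, a m = 0 := by
      intro m₀
      have hc : coeff (expF m₀) P = a m₀ := by
        rw [hPdef, MvPolynomial.coeff_sum]
        rw [Finset.sum_eq_single m₀]
        · simp [coeff_monomial]
        · intro m _ hm
          rw [coeff_monomial, if_neg (fun h => hm (expF_injective h))]
        · simp
      rw [hP0] at hc
      simpa using hc.symm
    rw [Finset.sum_eq_zero (fun m _ => by rw [ha0 m, abs_zero])] at ha
    exact zero_ne_one ha
  set S : Set ((Fin n → Fin i) → ℝ) := {a | (∑ m, |a m|) = 1} with hSdef
  have hclosed : IsClosed S :=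
    isClosed_eq (continuous_finset_sum _ fun m _ => (continuous_apply m).abs) continuous_const
  have hbdd : Bornology.IsBounded S := by
    refine (Metric.isBounded_closedBall (x := (0 : (Fin n → Fin i) → ℝ)) (r := 1)).subset ?_
    intro a ha
    rw [Metric.mem_closedBall, dist_zero_right]
    refine (pi_norm_le_iff_of_nonneg zero_le_one).mpr fun m => ?_
    rw [Real.norm_eq_abs]
    calc |a m| ≤ ∑ m', |a m'| := Finset.single_le_sum (f := fun m' => |a m'|) (fun _ _ => abs_nonneg _) (Finset.mem_univ m)
      _ = 1 := ha
  have hScomp : IsCompact S := Metric.isCompact_of_isClosed_isBounded hclosed hbdd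
  have hSne : S.Nonempty := by
    refine ⟨Pi.single (fun _ => (⟨0, hi⟩ : Fin i)) 1, ?_⟩
    show (∑ m, |Pi.single (fun _ => (⟨0, hi⟩ : Fin i)) (1:ℝ) m|) = 1
    simp [Pi.single_apply, apply_ite abs, Finset.sum_ite_eq']
  obtain ⟨a₀, ha₀S, hmin⟩ := hScomp.exists_isMinOn hSne Ncont.continuousOn
  refine ⟨N a₀, Npos a₀ ha₀S, ?_⟩
  intro a
  by_cases hs : (∑ m, |a m|) = 0
  · rw [hs]
    simpa using Nnonneg a
  · have hspos : 0 < ∑ m, |a m| :=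
      lt_of_le_of_ne (Finset.sum_nonneg fun _ _ => abs_nonneg _) (Ne.symm hs)
    set s := ∑ m, |a m| with hsdef
    have ha' : (s⁻¹ • a) ∈ S := by
      show (∑ m, |(s⁻¹ • a) m|) = 1
      simp only [Pi.smul_apply, smul_eq_mul, abs_mul, abs_of_pos (inv_pos.mpr hspos)]
      rw [← Finset.mul_sum, ← hsdef]
      field_simp
    have h1 : N a₀ ≤ N (s⁻¹ • a) := isMinOn_iff.mp hmin _ ha'
    rw [Nsmul, inv_pow, inv_mul_eq_div] at h1
    exact (le_div_iff₀ (by positivity)).mp h1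


theorem eval_bind {n : ℕ} (x : Fin n → ℝ) (g : Fin n → MvPolynomial (Fin n) ℝ)
    (p : MvPolynomial (Fin n) ℝ) :
    eval x (bind₁ g p) = eval (fun d => eval x (g d)) p :=
  aeval_bind₁ (R := ℝ) (S := ℝ) x g p

theorem totalDegree_bind_le {n : ℕ} (c : Fin n → ℝ) (L : ℝ) (p : MvPolynomial (Fin n) ℝ) :
    (bind₁ (fun d => C (c d) + C L * X d) p).totalDegree ≤ p.totalDegree := by
  conv_lhs => rw [p.as_sum, map_sum]
  refine (totalDegree_finset_sum _ _).trans (Finset.sup_le fun α hα => ?_)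
  rw [bind₁_monomial]
  refine (totalDegree_mul _ _).trans ?_
  rw [totalDegree_C, zero_add]
  refine (totalDegree_finset_prod _ _).trans ?_
  have h1 : ∀ d, ((C (c d) + C L * X d : MvPolynomial (Fin n) ℝ)).totalDegree ≤ 1 := by
    intro d
    refine (totalDegree_add _ _).trans (max_le (by simp) ?_)
    exact (totalDegree_mul _ _).trans (by simp [totalDegree_X])
  refine le_trans (Finset.sum_le_sum (g := fun d => α d) fun d _ => ?_) ?_
  · exact (totalDegree_pow _ _).trans (by
      simpa using Nat.mul_le_mul_left (α d) (h1 d))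
  · exact le_totalDegree hα

theorem eval_eq_sum_fin {n i : ℕ} (q : MvPolynomial (Fin n) ℝ) (hq : q.totalDegree < i)
    (x : Fin n → ℝ) :
    eval x q = ∑ m : Fin n → Fin i, coeff (expF m) q * ∏ d, x d ^ (m d : ℕ) := by
  rw [eval_eq']
  have hsub : q.support ⊆ Finset.image expF (Finset.univ : Finset (Fin n → Fin i)) := by
    intro α hα
    have hlt : ∀ d, α d < i := by
      intro d
      have h1 : α d ≤ α.sum (fun _ e => e) := by
        by_cases hd : d ∈ α.support
        · rw [Finsupp.sum]
          exact Finset.single_le_sum (fun _ _ => Nat.zero_le _) hd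
        · simp [Finsupp.notMem_support_iff.mp hd]
      exact lt_of_le_of_lt (h1.trans (le_totalDegree hα)) hq
    refine Finset.mem_image.mpr ⟨fun d => ⟨α d, hlt d⟩, Finset.mem_univ _, ?_⟩
    ext d; simp
  rw [Finset.sum_subset hsub, Finset.sum_image (fun m _ m' _ h => expF_injective h)]
  · simp
  · intro α _ hα
    simp [MvPolynomial.notMem_support_iff.mp hα]

theorem integral_cube_scale {n : ℕ} (c : Fin n → ℝ) {L : ℝ} (hL : 0 < L)
    (g : (Fin n → ℝ) → ℝ) :
    ∫ x in cube n 0 1, g (c + L • x) = (L ^ n)⁻¹ * ∫ y in cube n c L, g y := by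
  have hmem : ∀ x : Fin n → ℝ, (c + L • x ∈ cube n c L) ↔ x ∈ cube n 0 1 := by
    intro x
    simp only [cube, Set.mem_pi, Set.mem_univ, forall_true_left, Set.mem_Icc,
      Pi.add_apply, Pi.smul_apply, smul_eq_mul, Pi.zero_apply, zero_add, true_implies]
    constructor
    · intro h d
      exact ⟨by nlinarith [(h d).1], by nlinarith [(h d).2]⟩
    · intro h d
      exact ⟨by nlinarith [(h d).1], by nlinarith [(h d).2]⟩
  have h1 : ∫ x in cube n 0 1, g (c + L • x)
      = ∫ x, (cube n c L).indicator g (c + L • x) := by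
    rw [← integral_indicator (cube_measurable 0 1)]
    congr 1
    funext x
    by_cases hx : x ∈ cube n 0 1
    · rw [Set.indicator_of_mem hx, Set.indicator_of_mem ((hmem x).mpr hx)]
    · rw [Set.indicator_of_notMem hx, Set.indicator_of_notMem (fun hc => hx ((hmem x).mp hc))]
  rw [h1]
  have h2 := MeasureTheory.Measure.integral_comp_smul (μ := volume)
    (f := fun y => (cube n c L).indicator g (c + y)) L
  simp only [smul_eq_mul] at h2
  rw [h2]
  have h3 : ∫ y, (cube n c L).indicator g (c + y) = ∫ y in cube n c L, g y := by
    rw [integral_add_left_eq_self (μ := volume) (fun y => (cube n c L).indicator g y) c,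
      integral_indicator (cube_measurable c L)]
  rw [h3]
  congr 1
  rw [Module.finrank_pi, Fintype.card_fin]
  rw [abs_of_pos (by positivity)]

end Stmt4Aux

/-- Polynomial growth lemma: for cubes `Q ⊆ Q₁` in `ℝⁿ` and a polynomial `p` of total
degree `< i`, `sup_{Q₁} |p| ≤ C (|Q₁|/|Q|)^{i/n} (|Q|⁻¹ ∫_Q |p|²)^{1/2}` with `C = C(i,n)`. -/
theorem stmt4 (n i : ℕ) (hn : 0 < n) (hi : 0 < i) :
    ∃ C : ℝ, ∀ (c c₁ : Fin n → ℝ) (L L₁ : ℝ), 0 < L → 0 < L₁ →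
      cube n c L ⊆ cube n c₁ L₁ →
      ∀ p : MvPolynomial (Fin n) ℝ, p.totalDegree < i →
      ∀ x ∈ cube n c₁ L₁,
        |MvPolynomial.eval x p| ≤
          C * (L₁ ^ n / L ^ n) ^ ((i : ℝ) / n) *
            Real.sqrt ((L ^ n)⁻¹ * ∫ y in cube n c L, (MvPolynomial.eval y p) ^ 2) := by
  classical
  obtain ⟨ε, hε, hkey⟩ := Stmt4Aux.key n i hi
  refine ⟨Real.sqrt ε⁻¹, ?_⟩
  intro c c₁ L L₁ hL hL₁ hsub p hdeg x hx
  set q : MvPolynomial (Fin n) ℝ :=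
    MvPolynomial.bind₁
      (fun d => MvPolynomial.C (c d) + MvPolynomial.C L * MvPolynomial.X d) p with hqdef
  have hqdeg : q.totalDegree < i := lt_of_le_of_lt (Stmt4Aux.totalDegree_bind_le c L p) hdeg
  set a : (Fin n → Fin i) → ℝ := fun m => MvPolynomial.coeff (Stmt4Aux.expF m) q with hadef
  have h_repr : ∀ z, MvPolynomial.eval z q = Stmt4Aux.fA a z := fun z =>
    Stmt4Aux.eval_eq_sum_fin q hqdeg z
  have hcorner1 : c ∈ cube n c L :=
    Set.mem_pi.mpr fun d _ => ⟨le_refl _, by linarith⟩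
  have hcorner2 : (fun d => c d + L) ∈ cube n c L :=
    Set.mem_pi.mpr fun d _ => ⟨by linarith, le_refl _⟩
  have hc1 : ∀ d, c₁ d ≤ c d := fun d => (Set.mem_pi.mp (hsub hcorner1) d (Set.mem_univ d)).1
  have hc2 : ∀ d, c d + L ≤ c₁ d + L₁ := fun d =>
    (Set.mem_pi.mp (hsub hcorner2) d (Set.mem_univ d)).2
  have hLL : L ≤ L₁ := by
    have h1 := hc1 ⟨0, hn⟩
    have h2 := hc2 ⟨0, hn⟩
    linarith
  set t := L₁ / L with htdef
  have ht1 : 1 ≤ t := (one_le_div hL).mpr hLL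
  have ht0 : 0 ≤ t := le_trans zero_le_one ht1
  set x' : Fin n → ℝ := fun d => (x d - c d) / L with hx'def
  have hx't : ∀ d, |x' d| ≤ t := by
    intro d
    have hxd := Set.mem_pi.mp hx d (Set.mem_univ d)
    have habs : |x d - c d| ≤ L₁ := by
      rw [abs_le]
      constructor
      · have := hc2 d; have := hxd.1; linarith
      · have := hc1 d; have := hxd.2; linarith
    show |(x d - c d) / L| ≤ t
    rw [abs_div, abs_of_pos hL, htdef]
    gcongr
  have hevalx : MvPolynomial.eval x p = MvPolynomial.eval x' q := by
    rw [hqdef, Stmt4Aux.eval_bind]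
    have hpt : (fun d => MvPolynomial.eval x'
        (MvPolynomial.C (c d) + MvPolynomial.C L * MvPolynomial.X d)) = x := by
      funext d
      simp only [map_add, map_mul, MvPolynomial.eval_C, MvPolynomial.eval_X]
      show c d + L * ((x d - c d) / L) = x d
      field_simp
      ring
    rw [hpt]
  have hadeg : ∀ m : Fin n → Fin i, a m ≠ 0 → (∑ d, (m d : ℕ)) ≤ i := by
    intro m hm
    have hsup : Stmt4Aux.expF m ∈ q.support := MvPolynomial.mem_support_iff.mpr hm
    have h1 := MvPolynomial.le_totalDegree hsup
    have h2 : (Stmt4Aux.expF m).sum (fun _ e => e) = ∑ d, (m d : ℕ) := by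
      rw [Finsupp.sum_fintype]
      · simp
      · intro; rfl
    rw [h2] at h1
    omega
  have hgrowth : |Stmt4Aux.fA a x'| ≤ (∑ m, |a m|) * t ^ i := by
    show |∑ m, a m * ∏ d, x' d ^ (m d : ℕ)| ≤ _
    calc |∑ m, a m * ∏ d, x' d ^ (m d : ℕ)|
        ≤ ∑ m, |a m * ∏ d, x' d ^ (m d : ℕ)| := Finset.abs_sum_le_sum_abs _ _
      _ ≤ ∑ m, |a m| * t ^ i := by
          refine Finset.sum_le_sum fun m _ => ?_
          rw [abs_mul]
          by_cases hm : a m = 0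
          · simp [hm]
          · refine mul_le_mul_of_nonneg_left ?_ (abs_nonneg _)
            calc |∏ d, x' d ^ (m d : ℕ)| = ∏ d, |x' d| ^ (m d : ℕ) := by
                  rw [Finset.abs_prod]
                  exact Finset.prod_congr rfl fun d _ => abs_pow _ _
              _ ≤ ∏ d, t ^ (m d : ℕ) :=
                  Finset.prod_le_prod (fun d _ => by positivity)
                    (fun d _ => pow_le_pow_left₀ (abs_nonneg _) (hx't d) _)
              _ = t ^ (∑ d, (m d : ℕ)) := Finset.prod_pow_eq_pow_sum _ _ _
              _ ≤ t ^ i := pow_le_pow_right₀ ht1 (hadeg m hm)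
      _ = (∑ m, |a m|) * t ^ i := by rw [Finset.sum_mul]
  have hqc : ∀ z : Fin n → ℝ, Stmt4Aux.fA a z = MvPolynomial.eval (c + L • z) p := by
    intro z
    rw [← h_repr, hqdef, Stmt4Aux.eval_bind]
    have hpt : (fun d => MvPolynomial.eval z
        (MvPolynomial.C (c d) + MvPolynomial.C L * MvPolynomial.X d)) = c + L • z := by
      funext d
      simp only [map_add, map_mul, MvPolynomial.eval_C, MvPolynomial.eval_X, Pi.add_apply,
        Pi.smul_apply, smul_eq_mul]
    rw [hpt]
  have hInt : (∫ z in cube n 0 1, (Stmt4Aux.fA a z) ^ 2)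
      = (L ^ n)⁻¹ * ∫ y in cube n c L, (MvPolynomial.eval y p) ^ 2 := by
    rw [← Stmt4Aux.integral_cube_scale c hL (fun y => (MvPolynomial.eval y p) ^ 2)]
    simp_rw [hqc]
  have hsum_le : (∑ m, |a m|) ≤ Real.sqrt ε⁻¹ *
      Real.sqrt ((L ^ n)⁻¹ * ∫ y in cube n c L, (MvPolynomial.eval y p) ^ 2) := by
    rw [← Real.sqrt_mul (by positivity)]
    have h2 : (∑ m, |a m|) ^ 2
        ≤ ε⁻¹ * ((L ^ n)⁻¹ * ∫ y in cube n c L, (MvPolynomial.eval y p) ^ 2) := by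
      have h3 := hkey a
      rw [hInt] at h3
      calc (∑ m, |a m|) ^ 2 = ε⁻¹ * (ε * (∑ m, |a m|) ^ 2) := by
            field_simp
        _ ≤ ε⁻¹ * ((L ^ n)⁻¹ * ∫ y in cube n c L, (MvPolynomial.eval y p) ^ 2) :=
            mul_le_mul_of_nonneg_left h3 (by positivity)
    calc (∑ m, |a m|) = Real.sqrt ((∑ m, |a m|) ^ 2) :=
          (Real.sqrt_sq (Finset.sum_nonneg fun _ _ => abs_nonneg _)).symm
      _ ≤ _ := Real.sqrt_le_sqrt h2
  have hrpow : ((L₁ ^ n / L ^ n : ℝ)) ^ ((i : ℝ) / n) = t ^ i := by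
    have hn' : (n : ℝ) ≠ 0 := Nat.cast_ne_zero.mpr hn.ne'
    rw [show (L₁ ^ n / L ^ n : ℝ) = t ^ n from (div_pow L₁ L n).symm]
    rw [← Real.rpow_natCast t n, ← Real.rpow_natCast t i, ← Real.rpow_mul ht0]
    congr 1
    rw [mul_comm, div_mul_cancel₀ _ hn']
  rw [hevalx, h_repr]
  calc |Stmt4Aux.fA a x'| ≤ (∑ m, |a m|) * t ^ i := hgrowth
    _ ≤ (Real.sqrt ε⁻¹ *
          Real.sqrt ((L ^ n)⁻¹ * ∫ y in cube n c L, (MvPolynomial.eval y p) ^ 2)) * t ^ i :=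
        mul_le_mul_of_nonneg_right hsum_le (by positivity)
    _ = Real.sqrt ε⁻¹ * (L₁ ^ n / L ^ n) ^ ((i : ℝ) / n) *
          Real.sqrt ((L ^ n)⁻¹ * ∫ y in cube n c L, (MvPolynomial.eval y p) ^ 2) := by
        rw [hrpow]; ring
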